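/- Let ℓ₂ = ℓ²(ℕ, ℝ) and for nonzero x ∈ ℓ₂ define coordinatewise Ω₁(x)_j = 2·x_j·log(|x_j|/‖x‖₂) and Ω₂(x)_j = 2·x_j·log²(|x_j|/‖x‖₂) (with j-th entry 0 whenever x_j = 0), where log is the natural logarithm. For sequences y, x set ‖(y,x)‖_{Ω_{1,1}} = ‖y − Ω₁(x)‖₂ + ‖x‖₂ and for triples set ‖(w,y,x)‖_{Ω_{1,2}} = ‖(w − Ω₂(x), y − Ω₁(x))‖_{Ω_{1,1}} + ‖x‖₂ (each understood as +∞ unless the relevant differences lie in ℓ₂). Then for every n ≥ 1 and every choice of signs ε₁,…,ε_n ∈ {−1, 1}, the vector x = Σ_{i=1}^n ε_i e_i (where e_i are the unit coordinate vectors) satisfies ‖(0,0,x)‖_{Ω_{1,2}} = √n·(1 + log n + (1/2)·log² n). -/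

import Mathlib

noncomputable section

/-- The `ℓ₂`-norm of a real sequence, `‖f‖₂ = (∑ f_j²)^{1/2}` (the `tsum` gives the
correct value for the finitely supported sequences appearing below). -/
def norm2 (f : ℕ → ℝ) : ℝ := Real.sqrt (∑' j, f j ^ 2)

/-- The Kalton–Peck map `Ω₁(x)_j = 2 x_j log(|x_j|/‖x‖₂)` (the `j`-th entry vanishes
whenever `x_j = 0`, since it is a multiple of `x_j`). -/
def Om1 (x : ℕ → ℝ) : ℕ → ℝ := fun j => 2 * x j * Real.log (|x j| / norm2 x)

/-- The second-order Kalton–Peck map `Ω₂(x)_j = 2 x_j log²(|x_j|/‖x‖₂)`. -/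
def Om2 (x : ℕ → ℝ) : ℕ → ℝ := fun j => 2 * x j * Real.log (|x j| / norm2 x) ^ 2

/-- The quasinorm of the twisted sum `ℓ₂ ⊕_{Ω₁} ℓ₂` (the Kalton–Peck space `Z₂`):
`‖(y,x)‖ = ‖y − Ω₁(x)‖₂ + ‖x‖₂`. -/
def qnorm11 (y x : ℕ → ℝ) : ℝ := norm2 (y - Om1 x) + norm2 x

/-- The quasinorm of the twisted sum space `𝒵^(3)`:
`‖(w,y,x)‖ = ‖(w − Ω₂(x), y − Ω₁(x))‖_{Ω₁,₁} + ‖x‖₂`. -/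
def qnorm12 (w y x : ℕ → ℝ) : ℝ := qnorm11 (w - Om2 x) (y - Om1 x) + norm2 x

lemma norm2_of_sq (n : ℕ) (x : ℕ → ℝ) (hx : ∀ j, x j ^ 2 = if j < n then 1 else 0) (c : ℝ) :
    norm2 (fun j => c * x j) = |c| * Real.sqrt n := by
  unfold norm2
  have h : ∀ j, (c * x j) ^ 2 = if j < n then c ^ 2 else 0 := by
    intro j; rw [mul_pow, hx]; split <;> simp
  rw [tsum_eq_sum (s := Finset.range n) (by intro j hj; rw [h, if_neg (by simpa using hj)])]
  simp only [h]
  rw [Finset.sum_ite_of_true (by intro j hj; simpa using hj), Finset.sum_const,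
    Finset.card_range, nsmul_eq_mul, Real.sqrt_mul (by positivity), Real.sqrt_sq_eq_abs,
    mul_comm]


/-- **Cotype-2 estimate witness in `𝒵^(3)`.**
For every `n ≥ 1` and every choice of signs `ε₁,…,ε_n ∈ {−1,1}`, the vector
`x = ∑ ε_i e_i` satisfies `‖(0,0,x)‖_{Ω₁,₂} = √n (1 + log n + ½ log² n)`. -/
theorem qnorm12_sum_signs (n : ℕ) (hn : 1 ≤ n) (ε : Fin n → ℝ)
    (hε : ∀ i, ε i = 1 ∨ ε i = -1) :
    qnorm12 0 0 (∑ i : Fin n, ε i • (Pi.single (i : ℕ) (1 : ℝ) : ℕ → ℝ)) =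
      Real.sqrt n * (1 + Real.log n + (1 / 2) * Real.log n ^ 2) := by
  set x : ℕ → ℝ := ∑ i : Fin n, ε i • (Pi.single (i : ℕ) (1 : ℝ) : ℕ → ℝ) with hxdef
  have hx : ∀ j, x j = if h : j < n then ε ⟨j, h⟩ else 0 := by
    intro j
    rw [hxdef, Finset.sum_apply]
    by_cases h : j < n
    · rw [dif_pos h, Finset.sum_eq_single (⟨j, h⟩ : Fin n)]
      · simp
      · intro i _ hi
        have : (i : ℕ) ≠ j := fun hij => hi (by ext; exact hij)
        simp [Pi.single_apply, this]
      · simp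
    · rw [dif_neg h]
      apply Finset.sum_eq_zero
      intro i _
      have : (i : ℕ) ≠ j := fun hij => h (hij ▸ i.isLt)
      simp [Pi.single_apply, this]
  have hsq : ∀ j, x j ^ 2 = if j < n then 1 else 0 := by
    intro j
    rw [hx]
    by_cases h : j < n
    · rw [dif_pos h, if_pos h]
      rcases hε ⟨j, h⟩ with h1 | h1 <;> rw [h1] <;> norm_num
    · simp [h]
  have habs : ∀ j, x j ≠ 0 → |x j| = 1 := by
    intro j hj
    have := hsq j
    by_cases h : j < n
    · rw [if_pos h] at this
      nlinarith [abs_nonneg (x j), sq_abs (x j)]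
    · rw [hx, dif_neg h] at hj; exact absurd rfl hj
  have hn1 : (1 : ℝ) ≤ (n : ℝ) := by exact_mod_cast hn
  have hsn : (0 : ℝ) < Real.sqrt n := Real.sqrt_pos.2 (by linarith)
  have hlog : 0 ≤ Real.log n := Real.log_nonneg hn1
  have hnormx : norm2 x = Real.sqrt n := by
    have := norm2_of_sq n x hsq 1
    simpa using this
  have hlogs : Real.log (1 / Real.sqrt n) = -(1 / 2) * Real.log n := by
    rw [one_div, Real.log_inv, Real.log_sqrt (by linarith)]; ring
  have hOm1 : Om1 x = fun j => -Real.log n * x j := by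
    funext j
    unfold Om1
    by_cases hj : x j = 0
    · simp [hj]
    · rw [hnormx, habs j hj, hlogs]; ring
  have hOm2 : Om2 x = fun j => (1 / 2) * Real.log n ^ 2 * x j := by
    funext j
    unfold Om2
    by_cases hj : x j = 0
    · simp [hj]
    · rw [hnormx, habs j hj, hlogs]; ring
  set x' : ℕ → ℝ := fun j => Real.log n * x j with hx'def
  have hx'eq : (0 : ℕ → ℝ) - Om1 x = x' := by
    funext j; simp [hOm1, hx'def]
  have hnormx' : norm2 x' = Real.log n * Real.sqrt n := by
    rw [hx'def, norm2_of_sq n x hsq, abs_of_nonneg hlog]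
  have hOm1x' : Om1 x' = fun j => -Real.log n * x' j := by
    funext j
    unfold Om1
    by_cases hj : x' j = 0
    · simp [hj]
    · have hL : Real.log n ≠ 0 := by
        intro h; apply hj; rw [hx'def]; simp [h]
      have hxj : x j ≠ 0 := by
        intro h; apply hj; rw [hx'def]; simp [h]
      have : |x' j| = Real.log n := by
        rw [hx'def]
        simp only [abs_mul, habs j hxj, abs_of_nonneg hlog, mul_one]
      rw [hnormx', this, mul_comm, ← div_div, div_self hL, hlogs]
      ring
  have hdiff : (0 : ℕ → ℝ) - Om2 x - Om1 x' = fun j => (1 / 2) * Real.log n ^ 2 * x j := by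
    funext j
    rw [hOm1x']
    simp only [Pi.sub_apply, Pi.zero_apply, hOm2, hOm1x', hx'def]
    ring
  rw [qnorm12, hx'eq, qnorm11, hdiff, hnormx, hnormx',
    norm2_of_sq n x hsq, abs_of_nonneg (by positivity)]
  ring


end
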